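/- For a positive integer n with NAF-bitlength k, the number of zero digits in its reduced NAF equals deg(B_{2^k - n}), and the Hamming weight of its reduced NAF equals k - deg(B_{2^k - n}). -/

import Mathlib

open Polynomial in
/-- The Stern polynomial: `B 0 = 0`, `B 1 = 1`, `B (2n) = t * B n`, `B (2n+1) = B n + B (n+1)`. -/
noncomputable def sternP : ℕ → Polynomial ℕ
  | 0 => 0
  | 1 => 1
  | n + 2 =>
    if (n + 2) % 2 = 0 then X * sternP (n / 2 + 1)
    else sternP (n / 2 + 1) + sternP (n / 2 + 2)
decreasing_by all_goals omega

/-- The digits of a BSD representation lie in {-1, 0, 1}. -/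
def IsBSDDigits {i : ℕ} (b : Fin i → ℤ) : Prop := ∀ j, b j ∈ ({-1, 0, 1} : Set ℤ)

/-- The value represented by the digit string `b` (least significant digit `b 0`). -/
def bsdVal {i : ℕ} (b : Fin i → ℤ) : ℤ := ∑ j : Fin i, b j * 2 ^ (j : ℕ)

/-- `b` is a (not necessarily reduced) non-adjacent form digit string of length `k`:
digits in {-1,0,1}, no two adjacent digits both nonzero, and nonzero leading digit
(when `k > 0`). -/
def IsReducedNAF {k : ℕ} (b : Fin k → ℤ) : Prop :=
  IsBSDDigits b ∧
  (∀ j : Fin k, ∀ h : (j : ℕ) + 1 < k, b j = 0 ∨ b ⟨(j : ℕ) + 1, h⟩ = 0) ∧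
  (∀ h : 0 < k, b ⟨k - 1, Nat.sub_lt h one_pos⟩ ≠ 0)

/-- `m` has a reduced NAF representation of bitlength `k`. -/
def HasNAFLen (m : ℤ) (k : ℕ) : Prop :=
  ∃ b : Fin k → ℤ, IsReducedNAF b ∧ bsdVal b = m

/-- `I k`: the set of positive integers of NAF-bitlength `k`. -/
def NAFInterval (k : ℕ) : Set ℕ := {n : ℕ | HasNAFLen (n : ℤ) k}

/-- `a k = min I k`: `a 1 = 1`, `a 2 = 2`, `a k = 2^(k-2) + a (k-2)`. -/
def aseq : ℕ → ℕ
  | 0 => 0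
  | 1 => 1
  | 2 => 2
  | k + 3 => 2 ^ (k + 1) + aseq (k + 1)

/-- The NAF-bitlength of `n`. -/
noncomputable def nafLen (n : ℕ) : ℕ := sInf {k : ℕ | HasNAFLen (n : ℤ) k}

/-- The minimal Hamming weight of a BSD representation of `n` of length
equal to its NAF-bitlength. -/
noncomputable def minWeight (n : ℕ) : ℕ :=
  sInf {w : ℕ | ∃ b : Fin (nafLen n) → ℤ,
    IsBSDDigits b ∧ bsdVal b = (n : ℤ) ∧ {j | b j ≠ 0}.ncard = w}

/-- `Z n`: the number of zeros in an optimal (minimal-weight) BSD representation of `n`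
of length equal to its NAF-bitlength. -/
noncomputable def Zfun (n : ℕ) : ℕ := nafLen n - minWeight n

/-- `M n`: the number of optimal (minimal-weight) BSD representations of `n`
of length equal to its NAF-bitlength. -/
noncomputable def Mfun (n : ℕ) : ℕ :=
  {b : Fin (nafLen n) → ℤ |
    IsBSDDigits b ∧ bsdVal b = (n : ℤ) ∧ {j | b j ≠ 0}.ncard = minWeight n}.ncard

open Polynomial

lemma sternP_even (m : ℕ) (hm : 1 ≤ m) : sternP (2*m) = X * sternP m := by
  obtain ⟨r, rfl⟩ := Nat.exists_eq_add_of_le hm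
  rw [show 2*(1+r) = 2*r+2 by ring, sternP]
  have h1 : (2*r+2) % 2 = 0 := by omega
  have h2 : 2*r/2 = r := by omega
  rw [if_pos h1, h2, show r + 1 = 1 + r by ring]

lemma sternP_odd (m : ℕ) (hm : 1 ≤ m) : sternP (2*m+1) = sternP m + sternP (m+1) := by
  obtain ⟨r, rfl⟩ := Nat.exists_eq_add_of_le hm
  rw [show 2*(1+r)+1 = (2*r+1) + 2 by ring, sternP]
  have h1 : (2*r+1+2) % 2 ≠ 0 := by omega
  have h2 : (2*r+1)/2 = r := by omega
  rw [if_neg h1, h2, show r + 1 = 1 + r by ring, show r + 2 = 1 + r + 1 by ring]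


lemma nat_add_eq_zero (p q : Polynomial ℕ) (h : p + q = 0) : p = 0 ∧ q = 0 := by
  constructor <;> ext i <;>
  · have := Polynomial.ext_iff.mp h i
    simp only [coeff_add, coeff_zero] at this ⊢
    omega

lemma natDegree_add_nat (p q : Polynomial ℕ) :
    (p + q).natDegree = max p.natDegree q.natDegree := by
  rcases eq_or_ne p 0 with rfl | hp
  · simp
  rcases eq_or_ne q 0 with rfl | hq
  · simp
  refine le_antisymm (natDegree_add_le p q) ?_
  rcases le_total p.natDegree q.natDegree with h | h
  · rw [max_eq_right h]
    apply le_natDegree_of_ne_zero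
    rw [coeff_add]
    have h2 : q.coeff q.natDegree ≠ 0 := fun hc => hq (leadingCoeff_eq_zero.mp hc)
    omega
  · rw [max_eq_left h]
    apply le_natDegree_of_ne_zero
    rw [coeff_add]
    have h2 : p.coeff p.natDegree ≠ 0 := fun hc => hp (leadingCoeff_eq_zero.mp hc)
    omega
lemma sternP_ne_zero : ∀ m, 1 ≤ m → sternP m ≠ 0 := by
  intro m
  induction m using Nat.strong_induction_on with
  | _ m ih =>
    intro hm
    match m, hm with
    | 1, _ => simp [sternP]
    | (n+2), _ =>
      rcases Nat.even_or_odd (n+2) with ⟨r, hr⟩ | ⟨r, hr⟩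
      · have hr1 : 1 ≤ r := by omega
        rw [show n + 2 = 2*r by omega, sternP_even r hr1]
        exact mul_ne_zero Polynomial.X_ne_zero (ih r (by omega) hr1)
      · have hr1 : 1 ≤ r := by omega
        rw [show n + 2 = 2*r+1 by omega, sternP_odd r hr1]
        intro hc
        exact ih r (by omega) hr1 (nat_add_eq_zero _ _ hc).1

noncomputable def d (m : ℕ) : ℕ := (sternP m).natDegree

lemma d_even (m : ℕ) (hm : 1 ≤ m) : d (2*m) = d m + 1 := by
  unfold d
  rw [sternP_even m hm, natDegree_X_mul (sternP_ne_zero m hm)]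

lemma d_odd (m : ℕ) (hm : 1 ≤ m) : d (2*m+1) = max (d m) (d (m+1)) := by
  unfold d
  rw [sternP_odd m hm, natDegree_add_nat]

lemma d_neighbor : ∀ m, 1 ≤ m → d (m+1) ≤ d m + 1 ∧ d m ≤ d (m+1) + 1 := by
  intro m
  induction m using Nat.strong_induction_on with
  | _ m ih =>
    intro hm
    match m, hm with
    | 1, _ =>
      have h1 : d 1 = 0 := by simp [d, sternP]
      have h2 : d (1+1) = 1 := by
        rw [show (1+1 : ℕ) = 2*1 by norm_num, d_even 1 le_rfl, h1]
      omega
    | (n+2), _ =>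
      rcases Nat.even_or_odd (n+2) with ⟨r, hr⟩ | ⟨r, hr⟩
      · -- m = 2r, m+1 = 2r+1
        have hr1 : 1 ≤ r := by omega
        have he := d_even r hr1
        have ho := d_odd r hr1
        have hrn := ih r (by omega) hr1
        rw [show n+2 = 2*r by omega, show 2*r+1 = 2*r+1 from rfl]
        rw [he, ho]
        omega
      · -- m = 2r+1, m+1 = 2(r+1)
        have hr1 : 1 ≤ r := by omega
        have ho := d_odd r hr1
        have he := d_even (r+1) (by omega)
        have hrn := ih r (by omega) hr1
        rw [show n+2 = 2*r+1 by omega, show 2*r+1+1 = 2*(r+1) by omega]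
        rw [he, ho]
        omega

lemma bsdVal_succ {k : ℕ} (b : Fin (k+1) → ℤ) :
    bsdVal b = b 0 + 2 * bsdVal (fun j : Fin k => b j.succ) := by
  unfold bsdVal
  rw [Fin.sum_univ_succ, Finset.mul_sum]
  simp only [Fin.val_zero, pow_zero, mul_one, Fin.val_succ]
  congr 1
  apply Finset.sum_congr rfl
  intro j _
  ring

lemma tail_reduced {k : ℕ} (b : Fin (k+1) → ℤ) (hb : IsReducedNAF b) :
    IsReducedNAF (fun j : Fin k => b j.succ) := by
  refine ⟨fun j => hb.1 j.succ, fun j h => ?_, fun h => ?_⟩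
  · have h' : ((j.succ : Fin (k+1)) : ℕ) + 1 < k + 1 := by
      simp only [Fin.val_succ]; omega
    rcases hb.2.1 j.succ h' with h0 | h0
    · exact Or.inl h0
    · right
      convert h0 using 2
      ext; simp
  · have h2 := hb.2.2 (by omega)
    simp only
    convert h2 using 2
    simp [Fin.ext_iff]
    omega

lemma bsd_bound : ∀ (k : ℕ) (b : Fin k → ℤ), IsBSDDigits b →
    bsdVal b ≤ 2^k - 1 ∧ -(2^k - 1) ≤ bsdVal b := by
  intro k
  induction k with
  | zero => intro b _; simp [bsdVal]
  | succ k ih =>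
    intro b hb
    have h0 := hb 0
    simp only [Set.mem_insert_iff, Set.mem_singleton_iff] at h0
    have ht := ih (fun j => b j.succ) (fun j => hb j.succ)
    rw [bsdVal_succ]
    have hp : (2:ℤ)^(k+1) = 2 * 2^k := by ring
    rw [hp]
    omega

lemma naf_val_ne_zero : ∀ (k : ℕ), 0 < k → ∀ b : Fin k → ℤ, IsReducedNAF b →
    bsdVal b ≠ 0 := by
  intro k
  induction k with
  | zero => omega
  | succ k ih =>
    intro _ b hb
    rcases Nat.eq_zero_or_pos k with rfl | hk
    · have h2 := hb.2.2 (by omega)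
      simp only [bsdVal, Fin.sum_univ_one, Fin.val_zero, pow_zero, mul_one]
      convert h2 using 2
      simp [Fin.ext_iff]
    · have htv := ih hk _ (tail_reduced b hb)
      have h0 := hb.1 0
      simp only [Set.mem_insert_iff, Set.mem_singleton_iff] at h0
      rw [bsdVal_succ]
      omega

lemma main_aux : ∀ k n : ℕ, 0 < n → ∀ b : Fin k → ℤ, IsReducedNAF b → bsdVal b = (n:ℤ) →
    (∑ j, if b j = 0 then (1:ℕ) else 0) = d (2^k - n) := by
  intro k
  induction k using Nat.strong_induction_on with
  | _ k ih =>
  intro n hn b hb hv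
  match k with
  | 0 =>
    simp [bsdVal] at hv
    omega
  | (t+1) =>
    have h0 := hb.1 0
    simp only [Set.mem_insert_iff, Set.mem_singleton_iff] at h0
    set b' := fun j : Fin t => b j.succ with hb'def
    have hb'naf := tail_reduced b hb
    have hsum : (∑ j : Fin (t+1), if b j = 0 then (1:ℕ) else 0)
        = (if b 0 = 0 then 1 else 0) + ∑ j : Fin t, if b' j = 0 then (1:ℕ) else 0 :=
      Fin.sum_univ_succ _
    have hval : (n:ℤ) = b 0 + 2 * bsdVal b' := by rw [← hv, bsdVal_succ]
    have hbound := bsd_bound t b' (fun j => hb'naf.1 j)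
    have hpow : ((2^t : ℕ) : ℤ) = 2^t := by push_cast; ring
    rcases h0 with h0 | h0 | h0
    · -- b 0 = -1
      rcases Nat.eq_zero_or_pos t with rfl | ht
      · exfalso
        have : bsdVal b' = 0 := by
          simp [bsdVal]
        omega
      · obtain ⟨u, rfl⟩ : ∃ u, t = u + 1 := ⟨t-1, by omega⟩
        have hadj := hb.2.1 0 (by simp)
        have hb1 : b' 0 = 0 := by
          rcases hadj with h | h
          · exfalso; rw [h] at h0; norm_num at h0
          · show b (Fin.succ 0) = 0
            convert h using 2
            ext; simp
        set b'' := fun j : Fin u => b' j.succ with hb''def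
        have hb''naf := tail_reduced b' hb'naf
        have hval2 : bsdVal b' = b' 0 + 2 * bsdVal b'' := bsdVal_succ b'
        rw [hb1] at hval2
        rcases Nat.eq_zero_or_pos u with rfl | hu
        · exfalso
          apply hb'naf.2.2 (by omega)
          convert hb1 using 2
          ext; simp
        have hvne := naf_val_ne_zero u hu b'' hb''naf
        have hvpos : 0 < bsdVal b'' := by omega
        set n'' := (bsdVal b'').toNat with hn''def
        have hcast : bsdVal b'' = (n'' : ℤ) := by omega
        have hIH := ih u (by omega) n'' (by omega) b'' hb''naf hcast
        have hbb := bsd_bound u b'' (fun j => hb''naf.1 j)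
        have hpu : ((2^u : ℕ) : ℤ) = 2^u := by push_cast; ring
        have h2u : (1:ℕ) ≤ 2^u := Nat.one_le_two_pow
        have hle : n'' ≤ 2^u - 1 := by
          have h1 := hbb.1
          rw [hcast, ← hpu] at h1
          omega
        obtain ⟨s, hs⟩ : ∃ s, 2^u - n'' = s + 1 := ⟨2^u - n'' - 1, by omega⟩
        have hP : (2:ℕ)^(u+1+1) = 4 * 2^u := by ring
        have hsum2 : (∑ j : Fin (u+1), if b' j = 0 then (1:ℕ) else 0)
            = (if b' 0 = 0 then 1 else 0) + ∑ j : Fin u, if b'' j = 0 then (1:ℕ) else 0 :=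
          Fin.sum_univ_succ _
        have hne : n = 4*n'' - 1 ∧ 1 ≤ 4*n'' := by omega
        have hm : 2^(u+1+1) - n = 4*s + 5 := by omega
        have hd1 : d (4*s+5) = d (s+1) + 1 := by
          have he : d (2*(s+1)) = d (s+1) + 1 := d_even (s+1) (by omega)
          have ho : d (2*(2*(s+1))+1) = max (d (2*(s+1))) (d (2*(s+1)+1)) :=
            d_odd (2*(s+1)) (by omega)
          have ho2 : d (2*(s+1)+1) = max (d (s+1)) (d (s+1+1)) := d_odd (s+1) (by omega)
          have hnb := d_neighbor (s+1) (by omega)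
          have e1 : 2*(2*(s+1))+1 = 4*s+5 := by ring
          rw [e1, he, ho2] at ho
          omega
        rw [hsum, if_neg (by omega), hm, hd1, hsum2, if_pos hb1, hIH, hs]
        omega
    · -- b 0 = 0 : n even
      have hpos : 0 < bsdVal b' := by omega
      set n' := (bsdVal b').toNat with hn'
      have hcast : bsdVal b' = (n' : ℤ) := by omega
      have hIH := ih t (by omega) n' (by omega) b' hb'naf hcast
      have hle : n' ≤ 2^t - 1 := by
        have h1 := hbound.1
        rw [hcast, ← hpow] at h1
        have h2 : (1:ℕ) ≤ 2^t := Nat.one_le_two_pow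
        omega
      have hne : n = 2 * n' := by omega
      have h2p : (2:ℕ)^(t+1) = 2 * 2^t := by ring
      have hm : 2^(t+1) - n = 2 * (2^t - n') := by omega
      have h1le : 1 ≤ 2^t - n' := by
        have h2 : (1:ℕ) ≤ 2^t := Nat.one_le_two_pow
        omega
      rw [hsum, if_pos h0, hIH, hm, d_even _ h1le]
      omega
    · -- b 0 = 1
      rcases Nat.eq_zero_or_pos t with rfl | ht
      · have hz : bsdVal b' = 0 := by
          simp [bsdVal]
        have hn1 : n = 1 := by omega
        have hz2 : (∑ j : Fin 0, if b' j = 0 then (1:ℕ) else 0) = 0 := by simp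
        rw [hsum, if_neg (by omega), hz2, hn1]
        have : (2:ℕ)^1 - 1 = 1 := by norm_num
        rw [this]
        simp [d, sternP]
      · obtain ⟨u, rfl⟩ : ∃ u, t = u + 1 := ⟨t-1, by omega⟩
        have hadj := hb.2.1 0 (by simp)
        have hb1 : b' 0 = 0 := by
          rcases hadj with h | h
          · exfalso; rw [h] at h0; norm_num at h0
          · show b (Fin.succ 0) = 0
            convert h using 2
            ext; simp
        set b'' := fun j : Fin u => b' j.succ with hb''def
        have hb''naf := tail_reduced b' hb'naf
        have hval2 : bsdVal b' = b' 0 + 2 * bsdVal b'' := bsdVal_succ b'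
        rw [hb1] at hval2
        rcases Nat.eq_zero_or_pos u with rfl | hu
        · exfalso
          apply hb'naf.2.2 (by omega)
          convert hb1 using 2
          ext; simp
        have hvne := naf_val_ne_zero u hu b'' hb''naf
        have hvpos : 0 < bsdVal b'' := by omega
        set n'' := (bsdVal b'').toNat with hn''def
        have hcast : bsdVal b'' = (n'' : ℤ) := by omega
        have hIH := ih u (by omega) n'' (by omega) b'' hb''naf hcast
        have hbb := bsd_bound u b'' (fun j => hb''naf.1 j)
        have hpu : ((2^u : ℕ) : ℤ) = 2^u := by push_cast; ring
        have h2u : (1:ℕ) ≤ 2^u := Nat.one_le_two_pow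
        have hle : n'' ≤ 2^u - 1 := by
          have h1 := hbb.1
          rw [hcast, ← hpu] at h1
          omega
        obtain ⟨s, hs⟩ : ∃ s, 2^u - n'' = s + 1 := ⟨2^u - n'' - 1, by omega⟩
        have hP : (2:ℕ)^(u+1+1) = 4 * 2^u := by ring
        have hsum2 : (∑ j : Fin (u+1), if b' j = 0 then (1:ℕ) else 0)
            = (if b' 0 = 0 then 1 else 0) + ∑ j : Fin u, if b'' j = 0 then (1:ℕ) else 0 :=
          Fin.sum_univ_succ _
        have hne : n = 4*n'' + 1 := by omega
        have hm : 2^(u+1+1) - n = 4*s + 3 := by omega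
        have hd1 : d (4*s+3) = d (s+1) + 1 := by
          have he : d (2*(s+1)) = d (s+1) + 1 := d_even (s+1) (by omega)
          have ho : d (2*(2*s+1)+1) = max (d (2*s+1)) (d (2*s+1+1)) :=
            d_odd (2*s+1) (by omega)
          have hle2 : d (2*s+1) ≤ d (s+1) + 1 := by
            rcases Nat.eq_zero_or_pos s with rfl | hs1
            · have h1 : d 1 = 0 := by simp [d, sternP]
              have : 2*0+1 = 1 := by norm_num
              rw [this]
              omega
            · have ho2 : d (2*s+1) = max (d s) (d (s+1)) := d_odd s hs1
              have hnb := d_neighbor s hs1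
              omega
          have e1 : 2*(2*s+1)+1 = 4*s+3 := by ring
          have e2 : 2*s+1+1 = 2*(s+1) := by ring
          rw [e1, e2, he] at ho
          omega
        rw [hsum, if_neg (by omega), hm, hd1, hsum2, if_pos hb1, hIH, hs]
        omega

theorem naf_zeros_weight (n k : ℕ) (hn : 0 < n) (b : Fin k → ℤ)
    (hb : IsReducedNAF b) (hv : bsdVal b = (n : ℤ)) :
    {j | b j = 0}.ncard = (sternP (2 ^ k - n)).natDegree ∧
    {j | b j ≠ 0}.ncard = k - (sternP (2 ^ k - n)).natDegree := by
  classical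
  have hz : {j | b j = 0}.ncard = (Finset.univ.filter (fun j => b j = 0)).card := by
    rw [← Set.ncard_coe_finset]
    congr 1
    ext j
    simp
  have hnz : {j | b j ≠ 0}.ncard = (Finset.univ.filter (fun j => ¬ b j = 0)).card := by
    rw [← Set.ncard_coe_finset]
    congr 1
    ext j
    simp
  have hcard := Finset.card_filter_add_card_filter_not
    (s := (Finset.univ : Finset (Fin k))) (p := fun j => b j = 0)
  have hmain := main_aux k n hn b hb hv
  have hz2 : (Finset.univ.filter (fun j : Fin k => b j = 0)).card
      = ∑ j, if b j = 0 then 1 else 0 := Finset.card_filter _ _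
  have hdeg : d (2^k - n) = (sternP (2^k - n)).natDegree := rfl
  have huniv : (Finset.univ : Finset (Fin k)).card = k := by simp
  constructor
  · rw [hz, hz2, hmain, hdeg]
  · rw [hnz]
    have h1 : (Finset.univ.filter (fun j : Fin k => b j = 0)).card
        = (sternP (2^k-n)).natDegree := by rw [hz2, hmain, hdeg]
    omega
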